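/- Let $x$ have mean $0$, positive finite variance, and a symmetric distribution. Fix $\widetilde z\in(-1,1)$ and suppose a measurable $p:\mathbb{R}\to[0,1]$ satisfies $\mathbb{E}(p(x))=(1+\widetilde z)/2$, $p(x)=\mathbf{1}(b_1<x<b_2)$ a.s. for some $b_1\le 0\le -b_1\le b_2$ (an interval design), and $\widetilde z<0$. Then $\mathbb{E}(x^2 p(x)) \le \mathbb{E}(x^2)/2$. -/

import Mathlib

open MeasureTheory Set

/-- For a symmetric mean-zero distribution, `z̃ < 0`, and an interval
design `p = 1(b₁ < x < b₂)` with `b₁ ≤ 0 ≤ -b₁ ≤ b₂` and treated fraction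
`(1+z̃)/2`, one has `E(x² p(x)) ≤ E(x²)/2`. -/
theorem stmt17 (μ : Measure ℝ) [IsProbabilityMeasure μ]
    (hsym : μ.map (fun x : ℝ => -x) = μ)
    (hmean : ∫ x, x ∂μ = 0)
    (hint2 : Integrable (fun x : ℝ => x^2) μ)
    (hvar : 0 < ∫ x, x^2 ∂μ)
    (zt : ℝ) (hz : zt ∈ Ioo (-1:ℝ) 1) (hzneg : zt < 0)
    (b1 b2 : ℝ) (hb1 : b1 ≤ 0) (hb : -b1 ≤ b2)
    (p : ℝ → ℝ) (hm : Measurable p) (h01 : ∀ x, p x ∈ Icc (0:ℝ) 1)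
    (hfrac : ∫ x, p x ∂μ = (1 + zt)/2)
    (hind : ∀ᵐ x ∂μ, p x = if b1 < x ∧ x < b2 then 1 else 0) :
    ∫ x, x^2 * p x ∂μ ≤ (∫ x, x^2 ∂μ)/2 := by
  have hb1' : (0:ℝ) ≤ -b1 := neg_nonneg.mpr hb1
  have hb2 : (0:ℝ) ≤ b2 := le_trans hb1' hb
  set S : Set ℝ := Ioo b1 b2 with hSdef
  set T : Set ℝ := Ioo (-b2) (-b1) with hTdef
  have hS : MeasurableSet S := measurableSet_Ioo
  have hT : MeasurableSet T := measurableSet_Ioo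
  have hmem : ∀ x : ℝ, -x ∈ T ↔ x ∈ S := by
    intro x
    simp only [hSdef, hTdef, mem_Ioo]
    constructor <;> intro h <;> exact ⟨by linarith [h.1, h.2], by linarith [h.1, h.2]⟩
  -- rewrite the integral of x^2 * p
  have h1 : ∫ x, x^2 * p x ∂μ = ∫ x in S, x^2 ∂μ := by
    rw [← integral_indicator hS]
    apply integral_congr_ae
    filter_upwards [hind] with x hx
    rw [hx]
    by_cases h : b1 < x ∧ x < b2 <;>
      simp [hSdef, Set.indicator, Set.mem_Ioo, h]
  -- measure of S
  have hmuS : (μ S).toReal = (1 + zt)/2 := by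
    have h2 : ∫ x, p x ∂μ = ∫ x, S.indicator (fun _ => (1:ℝ)) x ∂μ := by
      apply integral_congr_ae
      filter_upwards [hind] with x hx
      rw [hx]
      by_cases h : b1 < x ∧ x < b2 <;>
        simp [hSdef, Set.indicator, Set.mem_Ioo, h]
    rw [integral_indicator_const (1:ℝ) hS, smul_eq_mul, mul_one] at h2
    rw [← measureReal_def, ← h2, ← hfrac]
  -- symmetry: measure of T equals measure of S
  have hmuT : μ T = μ S := by
    calc μ T = μ.map (fun x : ℝ => -x) T := by rw [hsym]
      _ = μ ((fun x : ℝ => -x) ⁻¹' T) := Measure.map_apply measurable_neg hT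
      _ = μ S := by
          congr 1
          ext x
          simpa using hmem x
  -- symmetry: integral over T equals integral over S
  have hsymInt : ∫ x in T, x^2 ∂μ = ∫ x in S, x^2 ∂μ := by
    rw [← integral_indicator hT, ← integral_indicator hS]
    have hmeas : AEStronglyMeasurable (fun x : ℝ => T.indicator (fun y => y^2) x)
        (μ.map (fun x : ℝ => -x)) := by
      rw [hsym]
      exact ((measurable_id.pow_const 2).indicator hT).aestronglyMeasurable
    calc ∫ x, T.indicator (fun y => y^2) x ∂μ
        = ∫ x, T.indicator (fun y => y^2) x ∂(μ.map (fun x : ℝ => -x)) := by rw [hsym]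
      _ = ∫ x, T.indicator (fun y => y^2) (-x) ∂μ :=
          integral_map measurable_neg.aemeasurable hmeas
      _ = ∫ x, S.indicator (fun y => y^2) x ∂μ := by
          congr 1
          funext x
          by_cases hx : x ∈ S
          · have hx' : -x ∈ T := (hmem x).mpr hx
            simp [Set.indicator, hx, hx', neg_sq]
          · have hx' : -x ∉ T := fun h => hx ((hmem x).mp h)
            simp [Set.indicator, hx, hx']
  have hintS : IntegrableOn (fun x : ℝ => x^2) S μ := hint2.integrableOn
  have hintT : IntegrableOn (fun x : ℝ => x^2) T μ := hint2.integrableOn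
  rw [h1]
  rcases eq_or_lt_of_le hb1 with h0 | h0
  · -- case b1 = 0 : S and T are disjoint
    have hdisj : Disjoint S T := by
      rw [Set.disjoint_left]
      intro x hxS hxT
      rw [hSdef, mem_Ioo] at hxS
      rw [hTdef, mem_Ioo] at hxT
      linarith [hxS.1, hxT.2]
    have hun : ∫ x in S ∪ T, x^2 ∂μ = ∫ x in S, x^2 ∂μ + ∫ x in T, x^2 ∂μ :=
      setIntegral_union hdisj hT hintS hintT
    have hle : ∫ x in S ∪ T, x^2 ∂μ ≤ ∫ x, x^2 ∂μ :=
      setIntegral_le_integral hint2 (ae_of_all _ fun x => sq_nonneg x)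
    linarith [hsymInt, hun, hle]
  · -- case b1 < 0
    set U : Set ℝ := Ioo (-b2) b2 with hUdef
    set A : Set ℝ := Ioo b1 (-b1) with hAdef
    have hU : MeasurableSet U := measurableSet_Ioo
    have hA : MeasurableSet A := measurableSet_Ioo
    have hSinterT : S ∩ T = A := by
      ext x
      simp only [hSdef, hTdef, hAdef, mem_inter_iff, mem_Ioo]
      constructor
      · rintro ⟨⟨h1, h2⟩, h3, h4⟩; exact ⟨h1, h4⟩
      · rintro ⟨h1, h2⟩; exact ⟨⟨h1, by linarith⟩, by linarith, h2⟩
    have hSdiffT : S \ T = Ico (-b1) b2 := by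
      ext x
      simp only [hSdef, hTdef, mem_diff, mem_Ioo, mem_Ico, not_and, not_lt]
      constructor
      · rintro ⟨⟨h1, h2⟩, h3⟩; exact ⟨h3 (by linarith), h2⟩
      · rintro ⟨h1, h2⟩; exact ⟨⟨by linarith, h2⟩, fun _ => h1⟩
    have hUinterT : U ∩ T = T := by
      apply inter_eq_self_of_subset_right
      intro x hx
      rw [hTdef, mem_Ioo] at hx
      rw [hUdef, mem_Ioo]
      exact ⟨hx.1, by linarith [hx.2]⟩
    have hUdiffT : U \ T = Ico (-b1) b2 := by
      ext x
      simp only [hUdef, hTdef, mem_diff, mem_Ioo, mem_Ico, not_and, not_lt]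
      constructor
      · rintro ⟨⟨h1, h2⟩, h3⟩; exact ⟨h3 h1, h2⟩
      · rintro ⟨h1, h2⟩; exact ⟨⟨by linarith, h2⟩, fun _ => h1⟩
    -- integral decomposition
    have hdecS : ∫ x in S ∩ T, x^2 ∂μ + ∫ x in S \ T, x^2 ∂μ = ∫ x in S, x^2 ∂μ :=
      integral_inter_add_diff hT hintS
    have hdecU : ∫ x in U ∩ T, x^2 ∂μ + ∫ x in U \ T, x^2 ∂μ = ∫ x in U, x^2 ∂μ :=
      integral_inter_add_diff hT hint2.integrableOn
    rw [hSinterT, hSdiffT] at hdecS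
    rw [hUinterT, hUdiffT] at hdecU
    -- so ∫_S + ∫_T = ∫_U + ∫_A
    have hsum : ∫ x in S, x^2 ∂μ + ∫ x in T, x^2 ∂μ
        = ∫ x in U, x^2 ∂μ + ∫ x in A, x^2 ∂μ := by linarith [hdecS, hdecU]
    -- measures
    have hmdecS : μ (S ∪ T) + μ (S ∩ T) = μ S + μ T := measure_union_add_inter S hT
    have hunion : S ∪ T = U := by
      ext x
      simp only [hSdef, hTdef, hUdef, mem_union, mem_Ioo]
      constructor
      · rintro (⟨h1, h2⟩ | ⟨h1, h2⟩) <;> exact ⟨by linarith, by linarith⟩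
      · rintro ⟨h1, h2⟩
        by_cases hx : x < -b1
        · right; exact ⟨h1, hx⟩
        · left; exact ⟨by linarith [not_lt.mp hx], h2⟩
    rw [hunion, hSinterT, hmuT] at hmdecS
    have hfinU : μ U ≠ ⊤ := measure_ne_top μ U
    have hfinA : μ A ≠ ⊤ := measure_ne_top μ A
    have hfinUc : μ Uᶜ ≠ ⊤ := measure_ne_top μ Uᶜ
    have hmcompl : μ U + μ Uᶜ = 1 := by
      rw [measure_add_measure_compl hU, measure_univ]
    have hmdecS' : (μ U).toReal + (μ A).toReal = 2 * ((1 + zt)/2) := by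
      rw [← hmuS, ← ENNReal.toReal_add hfinU hfinA, hmdecS]
      rw [ENNReal.toReal_add (measure_ne_top μ S) (measure_ne_top μ S)]
      ring
    have hmcompl' : (μ U).toReal + (μ Uᶜ).toReal = 1 := by
      rw [← ENNReal.toReal_add hfinU hfinUc, hmcompl, ENNReal.toReal_one]
    have hAB : (μ A).toReal ≤ (μ Uᶜ).toReal := by linarith
    -- bound ∫_A x² ≤ b1² μ(A)
    have hboundA : ∫ x in A, x^2 ∂μ ≤ b1^2 * (μ A).toReal := by
      have : ∫ x in A, x^2 ∂μ ≤ ∫ x in A, b1^2 ∂μ := by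
        apply setIntegral_mono_on hint2.integrableOn
          (integrableOn_const (measure_ne_top μ A)) hA
        intro x hx
        rw [hAdef, mem_Ioo] at hx
        nlinarith [hx.1, hx.2]
      rwa [setIntegral_const, smul_eq_mul, mul_comm] at this
    -- bound b1² μ(Uᶜ) ≤ ∫_{Uᶜ} x²
    have hboundB : b1^2 * (μ Uᶜ).toReal ≤ ∫ x in Uᶜ, x^2 ∂μ := by
      have : ∫ x in Uᶜ, b1^2 ∂μ ≤ ∫ x in Uᶜ, x^2 ∂μ := by
        apply setIntegral_mono_on
          (integrableOn_const (measure_ne_top μ Uᶜ))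
          hint2.integrableOn hU.compl
        intro x hx
        rw [hUdef, mem_compl_iff, mem_Ioo, not_and_or, not_lt, not_lt] at hx
        rcases hx with hx | hx
        · nlinarith
        · nlinarith
      rwa [setIntegral_const, smul_eq_mul, mul_comm] at this
    have htotal : ∫ x in U, x^2 ∂μ + ∫ x in Uᶜ, x^2 ∂μ = ∫ x, x^2 ∂μ :=
      integral_add_compl hU hint2
    have hmul : b1^2 * (μ A).toReal ≤ b1^2 * (μ Uᶜ).toReal :=
      mul_le_mul_of_nonneg_left hAB (sq_nonneg b1)
    linarith [hsymInt, hsum, hboundA, hboundB, htotal, hmul]
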